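/- arXiv:2408.13537 — 2 statements merged into one kernel-verified Lean document; each statement's English description precedes it below -/
import Mathlib

section
/- Let r>0, 1≤p<∞, and let ρ be an A_{p,3r}-metric on ℂⁿ. Suppose that for each ν∈rℤ^{2n} there is a positive invertible self-adjoint d×d matrix R_{Q_r(ν)} with ρ_{p,Q_r(ν)}(x) ≤ |R_{Q_r(ν)} x| ≤ √d·ρ_{p,Q_r(ν)}(x) for all x∈ℂᵈ. Then for all ν,ν'∈rℤ^{2n}, the operator norm satisfies ‖R_{Q_r(ν)} R_{Q_r(ν')}^{-1}‖ ≤ √d·(3^{2n}·A_{p,3r}(ρ))^{(√(2n)/r)|ν−ν'|}. -/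
open MeasureTheory ENNReal
open scoped ComplexOrder

noncomputable section

/-- `ℂⁿ` as a Euclidean space. -/
abbrev Cspace (n : ℕ) := EuclideanSpace ℂ (Fin n)

/-- Lebesgue measure on `ℂⁿ`. -/
instance CspaceMeasureSpace (n : ℕ) : MeasureSpace (Cspace n) where
  volume := Measure.map (WithLp.toLp 2) (volume : Measure (Fin n → ℂ))

/-- The (closed) cube in `ℂⁿ ≅ ℝ^{2n}` centered at `u` with side length `r`. -/
def cube {n : ℕ} (u : Cspace n) (r : ℝ) : Set (Cspace n) :=
  {z | ∀ j, |(z j).re - (u j).re| ≤ r / 2 ∧ |(z j).im - (u j).im| ≤ r / 2}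

/-- A `d × d` complex matrix acting on the Euclidean space `ℂᵈ`. -/
def matAct {d : ℕ} (M : Matrix (Fin d) (Fin d) ℂ) (x : EuclideanSpace ℂ (Fin d)) :
    EuclideanSpace ℂ (Fin d) :=
  Matrix.toEuclideanLin M x

/-- The operator norm of a `d × d` matrix acting on Euclidean `ℂᵈ`. -/
def matOpNorm {d : ℕ} (M : Matrix (Fin d) (Fin d) ℂ) : ℝ :=
  ‖(Matrix.toEuclideanCLM (𝕜 := ℂ) M :
      EuclideanSpace ℂ (Fin d) →L[ℂ] EuclideanSpace ℂ (Fin d))‖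

open scoped Classical in
/-- The real power `M ^ t` of a positive definite (Hermitian) matrix, defined through the
spectral functional calculus; junk value `1` if `M` is not positive definite. -/
def matRpow {d : ℕ} (M : Matrix (Fin d) (Fin d) ℂ) (t : ℝ) : Matrix (Fin d) (Fin d) ℂ :=
  if h : M.PosDef then h.1.cfc (fun x => x ^ t) else 1

/-- A matrix weight: measurable, a.e. positive definite (hence invertible self-adjoint),
with `W` and `W⁻¹` locally integrable. -/
def IsMatrixWeight {n d : ℕ} (W : Cspace n → Matrix (Fin d) (Fin d) ℂ) : Prop :=
  (∀ i j, Measurable fun z => W z i j) ∧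
  (∀ᵐ z ∂(volume : Measure (Cspace n)), (W z).PosDef) ∧
  (∀ i j, LocallyIntegrable (fun z => W z i j) volume) ∧
  (∀ i j, LocallyIntegrable (fun z => (W z)⁻¹ i j) volume)

/-- The Gaussian density `(α/π)^n e^{-α|u|²}`. -/
def gaussDensity {n : ℕ} (α : ℝ) (u : Cspace n) : ℝ :=
  (α / Real.pi) ^ n * Real.exp (-α * ‖u‖ ^ 2)

/-- The `L^p_α`-norm `(∫ ‖f(z)‖^p e^{-(pα/2)|z|²} dv(z))^{1/p}` (value in `ℝ≥0∞`). -/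
def lpNormGen {E : Type*} [NormedAddCommGroup E] {n : ℕ} (α p : ℝ) (f : Cspace n → E) : ℝ≥0∞ :=
  (∫⁻ z, (‖f z‖₊ : ℝ≥0∞) ^ p * ENNReal.ofReal (Real.exp (-(p * α / 2) * ‖z‖ ^ 2))) ^ (1 / p)

/-- The norm of `L^p_{α,W}(ℂⁿ;ℂᵈ)`. -/
def wLpNorm {n d : ℕ} (α p : ℝ) (W : Cspace n → Matrix (Fin d) (Fin d) ℂ)
    (f : Cspace n → EuclideanSpace ℂ (Fin d)) : ℝ≥0∞ :=
  lpNormGen α p (fun z => matAct (matRpow (W z) (1 / p)) (f z))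

/-- The norm of `L^∞_{α,V}(ℂⁿ;ℂᵈ)`: `ess sup |V(z) f(z)| e^{-(α/2)|z|²}`. -/
def wLinfNorm {n d : ℕ} (α : ℝ) (V : Cspace n → Matrix (Fin d) (Fin d) ℂ)
    (f : Cspace n → EuclideanSpace ℂ (Fin d)) : ℝ≥0∞ :=
  essSup (fun z => (‖matAct (V z) (f z)‖₊ : ℝ≥0∞) *
    ENNReal.ofReal (Real.exp (-(α / 2) * ‖z‖ ^ 2))) volume

/-- The Fock projection `P_α f(z) = ∫ f(u) e^{α⟨z,u⟩} dλ_α(u)`. -/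
def fockProj {n d : ℕ} (α : ℝ) (f : Cspace n → EuclideanSpace ℂ (Fin d)) :
    Cspace n → EuclideanSpace ℂ (Fin d) :=
  fun z => ∫ u, gaussDensity α u • (Complex.exp ((α : ℂ) * (inner ℂ u z : ℂ)) • f u)

/-- The maximal Fock projection
`P⁺_{α,W} f(z) = ∫ |W^{1/p}(z) W^{-1/p}(u) f(u)| |e^{α⟨z,u⟩}| dλ_α(u)`. -/
def maxFockProj {n d : ℕ} (α p : ℝ) (W : Cspace n → Matrix (Fin d) (Fin d) ℂ)
    (f : Cspace n → EuclideanSpace ℂ (Fin d)) : Cspace n → ℝ :=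
  fun z => ∫ u, gaussDensity α u *
    (‖matAct (matRpow (W z) (1 / p)) (matAct (matRpow (W u) (-(1 / p))) (f u))‖ *
      ‖Complex.exp ((α : ℂ) * (inner ℂ u z : ℂ))‖)

/-- `P_α` is bounded on `L^p_{α,W}(ℂⁿ;ℂᵈ)` with constant `C`. -/
def FockProjBdd {n d : ℕ} (α p : ℝ) (W : Cspace n → Matrix (Fin d) (Fin d) ℂ) (C : ℝ) : Prop :=
  ∀ f : Cspace n → EuclideanSpace ℂ (Fin d), Measurable f → wLpNorm α p W f < ⊤ →
    wLpNorm α p W (fockProj α f) ≤ ENNReal.ofReal C * wLpNorm α p W f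

/-- `P⁺_{α,W}` is bounded from `L^p_α(ℂⁿ;ℂᵈ)` to `L^p_α(ℂⁿ;ℂ)` with constant `C`. -/
def MaxFockProjBdd {n d : ℕ} (α p : ℝ) (W : Cspace n → Matrix (Fin d) (Fin d) ℂ) (C : ℝ) : Prop :=
  ∀ f : Cspace n → EuclideanSpace ℂ (Fin d), Measurable f → lpNormGen α p f < ⊤ →
    lpNormGen α p (maxFockProj α p W f) ≤ ENNReal.ofReal C * lpNormGen α p f

/-- The normalized reproducing kernel `k^α_u(z) = e^{α⟨z,u⟩ - (α/2)|u|²}`. -/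
def fockKernel {n : ℕ} (α : ℝ) (u : Cspace n) (z : Cspace n) : ℂ :=
  Complex.exp ((α : ℂ) * (inner ℂ u z : ℂ) - ((α / 2 * ‖u‖ ^ 2 : ℝ) : ℂ))

/-- The operator `P_{α,u,r} f = χ_{Q_r(u)} k^α_u ∫_{Q_r(u)} f conj(k^α_u) dλ_α`. -/
def cubeProj {n d : ℕ} (α : ℝ) (u : Cspace n) (r : ℝ)
    (f : Cspace n → EuclideanSpace ℂ (Fin d)) : Cspace n → EuclideanSpace ℂ (Fin d) :=
  fun z => Set.indicator (cube u r)
    (fun w => fockKernel α u w •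
      (∫ ζ in cube u r, gaussDensity α ζ • ((starRingEnd ℂ) (fockKernel α u ζ) • f ζ))) z

/-- The pairing `⟨f,g⟩_α = ∫ ⟨f(z), g(z)⟩ e^{-α|z|²} dv(z)` (the inner product being linear
in the first slot and conjugate-linear in the second one). -/
def fockPairing {n d : ℕ} (α : ℝ) (f g : Cspace n → EuclideanSpace ℂ (Fin d)) : ℂ :=
  ∫ z, Real.exp (-α * ‖z‖ ^ 2) • (inner ℂ (g z) (f z) : ℂ)

/-- A norm on `ℂᵈ` (as a real-valued function). -/
def IsANorm {d : ℕ} (g : EuclideanSpace ℂ (Fin d) → ℝ) : Prop :=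
  (∀ x, x ≠ 0 → 0 < g x) ∧ (∀ (c : ℂ) x, g (c • x) = ‖c‖ * g x) ∧
  (∀ x y, g (x + y) ≤ g x + g y)

/-- A metric: a measurable family of norms on `ℂᵈ` indexed by `ℂⁿ`. -/
def IsMetric {n d : ℕ} (ρ : Cspace n → EuclideanSpace ℂ (Fin d) → ℝ) : Prop :=
  (∀ z, IsANorm (ρ z)) ∧ (∀ x, Measurable fun z => ρ z x)

/-- The dual norm `ρ*(x) = sup_{y ≠ 0} |⟨x,y⟩| / ρ(y)` (value in `ℝ≥0∞`). -/
def dualNormE {d : ℕ} (g : EuclideanSpace ℂ (Fin d) → ℝ) (x : EuclideanSpace ℂ (Fin d)) :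
    ℝ≥0∞ :=
  ⨆ (y : EuclideanSpace ℂ (Fin d)) (_ : y ≠ 0),
    (‖(inner ℂ y x : ℂ)‖₊ : ℝ≥0∞) / ENNReal.ofReal (g y)

/-- The dual of an `ℝ≥0∞`-valued gauge on `ℂᵈ`. -/
def dualGaugeE {d : ℕ} (G : EuclideanSpace ℂ (Fin d) → ℝ≥0∞) (x : EuclideanSpace ℂ (Fin d)) :
    ℝ≥0∞ :=
  ⨆ (y : EuclideanSpace ℂ (Fin d)) (_ : y ≠ 0), (‖(inner ℂ y x : ℂ)‖₊ : ℝ≥0∞) / G y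

/-- The `q`-average of an `ℝ≥0∞`-valued gauge family over a set `Q`:
`((1/v(Q)) ∫_Q F_z(x)^q dv(z))^{1/q}`. -/
def avgGauge {n d : ℕ} (q : ℝ) (Q : Set (Cspace n))
    (F : Cspace n → EuclideanSpace ℂ (Fin d) → ℝ≥0∞) (x : EuclideanSpace ℂ (Fin d)) : ℝ≥0∞ :=
  ((∫⁻ z in Q, (F z x) ^ q) / volume Q) ^ (1 / q)

/-- The averaged norm `ρ_{q,Q}(x) = ((1/v(Q)) ∫_Q ρ_z(x)^q dv(z))^{1/q}`. -/
def metricAvg {n d : ℕ} (q : ℝ) (Q : Set (Cspace n))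
    (ρ : Cspace n → EuclideanSpace ℂ (Fin d) → ℝ) (x : EuclideanSpace ℂ (Fin d)) : ℝ≥0∞ :=
  avgGauge q Q (fun z y => ENNReal.ofReal (ρ z y)) x

/-- The averaged dual norm `ρ*_{p',Q}` where `p'` is the conjugate exponent of `p`
(`ess sup` over `Q` of the pointwise dual norms when `p = 1`, i.e. `p' = ∞`). -/
def metricDualAvg {n d : ℕ} (p : ℝ) (Q : Set (Cspace n))
    (ρ : Cspace n → EuclideanSpace ℂ (Fin d) → ℝ) (x : EuclideanSpace ℂ (Fin d)) : ℝ≥0∞ :=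
  if p = 1 then essSup (fun z => dualNormE (ρ z) x) (volume.restrict Q)
  else avgGauge (p / (p - 1)) Q (fun z => dualNormE (ρ z)) x

/-- The `A_{p,r}`-condition for a metric `ρ`, with constant `C`:
`ρ*_{p',Q}(x) ≤ C (ρ_{p,Q})*(x)` for all `x ∈ ℂᵈ` and all cubes `Q` of side length `r`. -/
def IsAprBound {n d : ℕ} (p r : ℝ) (ρ : Cspace n → EuclideanSpace ℂ (Fin d) → ℝ) (C : ℝ) :
    Prop :=
  ∀ (u : Cspace n) (x : EuclideanSpace ℂ (Fin d)),
    metricDualAvg p (cube u r) ρ x ≤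
      ENNReal.ofReal C * dualGaugeE (metricAvg p (cube u r) ρ) x

/-- `ρ` is an `A_{p,r}`-metric. -/
def IsAprMetric {n d : ℕ} (p r : ℝ) (ρ : Cspace n → EuclideanSpace ℂ (Fin d) → ℝ) : Prop :=
  ∃ C : ℝ, 0 ≤ C ∧ IsAprBound p r ρ C

/-- The metric `ρ_z(x) = |W^{1/p}(z) x|` associated with a matrix weight `W`. -/
def weightMetric {n d : ℕ} (p : ℝ) (W : Cspace n → Matrix (Fin d) (Fin d) ℂ) :
    Cspace n → EuclideanSpace ℂ (Fin d) → ℝ :=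
  fun z x => ‖matAct (matRpow (W z) (1 / p)) x‖

/-- `W` is an `A_{p,r}`-weight. -/
def IsAprWeight {n d : ℕ} (p r : ℝ) (W : Cspace n → Matrix (Fin d) (Fin d) ℂ) : Prop :=
  IsAprMetric p r (weightMetric p W)

end

noncomputable def latticePt {n : ℕ} (r : ℝ) (m : Fin n → ℤ × ℤ) : Cspace n :=
  (WithLp.equiv 2 (Fin n → ℂ)).symm fun j => ⟨r * ((m j).1 : ℝ), r * ((m j).2 : ℝ)⟩

section Aux
open MeasureTheory ENNReal

variable {n d : ℕ}

lemma latticePt_re (r : ℝ) (m : Fin n → ℤ × ℤ) (j : Fin n) :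
    (latticePt r m j).re = r * ((m j).1 : ℝ) := rfl

lemma latticePt_im (r : ℝ) (m : Fin n → ℤ × ℤ) (j : Fin n) :
    (latticePt r m j).im = r * ((m j).2 : ℝ) := rfl

lemma cube_eq_pi (u : Cspace n) (s : ℝ) :
    WithLp.toLp 2 ⁻¹' cube u s = Set.pi Set.univ (fun j => {z : ℂ |
      |z.re - (u j).re| ≤ s / 2 ∧ |z.im - (u j).im| ≤ s / 2}) := by
  ext z
  constructor
  · intro h j _; exact h j
  · intro h j; exact h j (Set.mem_univ j)

lemma volume_complex_square (a b c : ℝ) (_hc : 0 ≤ c) :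
    volume {z : ℂ | |z.re - a| ≤ c ∧ |z.im - b| ≤ c} = ENNReal.ofReal (2 * c) ^ 2 := by
  have : {z : ℂ | |z.re - a| ≤ c ∧ |z.im - b| ≤ c} =
      Complex.measurableEquivRealProd ⁻¹' (Set.Icc (a - c) (a + c) ×ˢ Set.Icc (b - c) (b + c)) := by
    ext z
    simp [Complex.measurableEquivRealProd_apply, Set.mem_Icc, abs_le]
    constructor
    · rintro ⟨h1, h2⟩; constructor <;> constructor <;> linarith [h1.1, h1.2, h2.1, h2.2]
    · rintro ⟨⟨h1, h2⟩, h3, h4⟩; constructor <;> constructor <;> linarith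
  rw [this, Complex.volume_preserving_equiv_real_prod.measure_preimage
    ((measurableSet_Icc.prod measurableSet_Icc).nullMeasurableSet)]
  rw [show (volume : Measure (ℝ × ℝ)) = Measure.prod volume volume from rfl,
    Measure.prod_prod, Real.volume_Icc, Real.volume_Icc]
  rw [show a + c - (a - c) = 2*c by ring, show b + c - (b - c) = 2*c by ring, sq]

lemma volume_cube (u : Cspace n) (s : ℝ) (hs : 0 ≤ s) :
    volume (cube u s) = ENNReal.ofReal s ^ (2 * n) := by
  show Measure.map (WithLp.toLp 2) (volume : Measure (Fin n → ℂ)) (cube u s) = _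
  rw [← MeasurableEquiv.coe_toLp, MeasurableEquiv.map_apply, MeasurableEquiv.coe_toLp, cube_eq_pi]
  have hpi : volume (Set.pi Set.univ (fun j => {z : ℂ |
      |z.re - (u j).re| ≤ s / 2 ∧ |z.im - (u j).im| ≤ s / 2}) : Set (Fin n → ℂ)) =
      ∏ j : Fin n, volume {z : ℂ | |z.re - (u j).re| ≤ s / 2 ∧ |z.im - (u j).im| ≤ s / 2} :=
    MeasureTheory.volume_pi_pi _
  refine hpi.trans ?_
  have : ∀ j : Fin n, volume {z : ℂ | |z.re - (u j).re| ≤ s / 2 ∧ |z.im - (u j).im| ≤ s / 2}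
      = ENNReal.ofReal s ^ 2 := by
    intro j
    rw [volume_complex_square _ _ _ (by linarith)]
    norm_num [mul_div_cancel₀]
  simp only [this, Finset.prod_const, Finset.card_univ, Fintype.card_fin, ← pow_mul]

end Aux
section Aux2
open MeasureTheory ENNReal

variable {n d : ℕ}

/-- division comparison in ℝ≥0∞ -/
lemma ENN_div_le_div_full {I a v v' K : ℝ≥0∞} (hIa : I ≤ a) (hvv' : v ≤ v')
    (hv0 : v ≠ 0) (hv't : v' ≠ ∞) (hv'0 : v' ≠ 0) (hK : v' ≤ K * v) :
    I / v ≤ K * (a / v') := by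
  have hvt : v ≠ ∞ := fun h => hv't (top_le_iff.mp (h ▸ hvv'))
  have h1 : v⁻¹ * v' ≤ K := by
    calc v⁻¹ * v' ≤ v⁻¹ * (K * v) := by exact mul_le_mul_right hK _
    _ = K * (v⁻¹ * v) := by ring
    _ = K := by rw [ENNReal.inv_mul_cancel hv0 hvt, mul_one]
  have h2 : v⁻¹ ≤ K * v'⁻¹ := by
    calc v⁻¹ = (v⁻¹ * v') * v'⁻¹ := by
          rw [mul_assoc, ENNReal.mul_inv_cancel hv'0 hv't, mul_one]
    _ ≤ K * v'⁻¹ := mul_le_mul_left h1 _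
  calc I / v = I * v⁻¹ := div_eq_mul_inv I v
  _ ≤ a * (K * v'⁻¹) := mul_le_mul' hIa h2
  _ = K * (a * v'⁻¹) := by ring
  _ = K * (a / v') := by rw [div_eq_mul_inv]

lemma avgGauge_mono_subset {q K : ℝ} (hq : 0 < q) {Q Q' : Set (Cspace n)}
    (F : Cspace n → EuclideanSpace ℂ (Fin d) → ℝ≥0∞) (x : EuclideanSpace ℂ (Fin d))
    (hsub : Q ⊆ Q') (hv0 : volume Q ≠ 0) (hv't : volume Q' ≠ ∞) (hv'0 : volume Q' ≠ 0)
    (hK : volume Q' ≤ ENNReal.ofReal K * volume Q) :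
    avgGauge q Q F x ≤ ENNReal.ofReal K ^ (1 / q) * avgGauge q Q' F x := by
  unfold avgGauge
  have hIa : (∫⁻ z in Q, F z x ^ q) ≤ ∫⁻ z in Q', F z x ^ q :=
    lintegral_mono' (Measure.restrict_mono hsub le_rfl) le_rfl
  have key := ENN_div_le_div_full hIa (measure_mono hsub) hv0 hv't hv'0 hK
  calc ((∫⁻ z in Q, F z x ^ q) / volume Q) ^ (1 / q)
      ≤ (ENNReal.ofReal K * ((∫⁻ z in Q', F z x ^ q) / volume Q')) ^ (1 / q) :=
        ENNReal.rpow_le_rpow key (by positivity)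
  _ = ENNReal.ofReal K ^ (1 / q) * ((∫⁻ z in Q', F z x ^ q) / volume Q') ^ (1 / q) :=
        ENNReal.mul_rpow_of_nonneg _ _ (by positivity)

end Aux2
section Aux3
open MeasureTheory ENNReal

variable {n d : ℕ}

lemma dualNormE_ge (g : EuclideanSpace ℂ (Fin d) → ℝ) {u : EuclideanSpace ℂ (Fin d)}
    (hu : u ≠ 0) (x : EuclideanSpace ℂ (Fin d)) :
    (‖(inner ℂ u x : ℂ)‖₊ : ℝ≥0∞) / ENNReal.ofReal (g u) ≤ dualNormE g x :=
  le_iSup_of_le u (le_iSup_of_le hu le_rfl)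

lemma pairing_le {p : ℝ} (hp : 1 ≤ p)
    {ρ : Cspace n → EuclideanSpace ℂ (Fin d) → ℝ} (hρ : IsMetric ρ)
    (Q : Set (Cspace n)) (hv0 : volume Q ≠ 0) (hvt : volume Q ≠ ∞)
    (u x : EuclideanSpace ℂ (Fin d)) :
    (‖(inner ℂ u x : ℂ)‖₊ : ℝ≥0∞) ≤ metricAvg p Q ρ u * metricDualAvg p Q ρ x := by
  by_cases hu : u = 0
  · simp [hu]
  set c : ℝ≥0∞ := (‖(inner ℂ u x : ℂ)‖₊ : ℝ≥0∞) with hc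
  have hct : c ≠ ∞ := coe_ne_top
  set f : Cspace n → ℝ≥0∞ := fun z => ENNReal.ofReal (ρ z u) with hf
  have hfmeas : Measurable f := (hρ.2 u).ennreal_ofReal
  have hf0 : ∀ z, f z ≠ 0 := fun z =>
    (ENNReal.ofReal_pos.mpr ((hρ.1 z).1 u hu)).ne'
  have hft : ∀ z, f z ≠ ∞ := fun z => ofReal_ne_top
  set g : Cspace n → ℝ≥0∞ := fun z => c / f z with hg
  have hgmeas : Measurable g := Measurable.div measurable_const hfmeas
  have hfg : ∀ z, f z * g z = c := fun z => ENNReal.mul_div_cancel (hf0 z) (hft z)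
  have hgd : ∀ z, g z ≤ dualNormE (ρ z) x := fun z => dualNormE_ge (ρ z) hu x
  set v := volume Q with hv
  have hconst : ∫⁻ z in Q, c = c * v := by rw [setLIntegral_const]
  by_cases hp1 : p = 1
  · -- p = 1 : essSup case
    subst hp1
    have hS : ∀ᵐ z ∂(volume.restrict Q), g z ≤ essSup (fun z => dualNormE (ρ z) x)
        (volume.restrict Q) := by
      filter_upwards [ae_le_essSup (fun z => dualNormE (ρ z) x)] with z hz
      exact (hgd z).trans hz
    set S := essSup (fun z => dualNormE (ρ z) x) (volume.restrict Q) with hSdef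
    have h1 : c * v ≤ (∫⁻ z in Q, f z) * S := by
      rw [← hconst]
      have : ∀ᵐ z ∂(volume.restrict Q), c ≤ f z * S := by
        filter_upwards [hS] with z hz
        rw [← hfg z]; exact mul_le_mul_right hz _
      calc (∫⁻ z in Q, c) ≤ ∫⁻ z in Q, f z * S := lintegral_mono_ae this
      _ = (∫⁻ z in Q, f z) * S := lintegral_mul_const _ hfmeas
    have hAvg : metricAvg 1 Q ρ u = (∫⁻ z in Q, f z) / v := by
      simp only [metricAvg, avgGauge, ENNReal.rpow_one, one_div_one_div]
      simp [ENNReal.rpow_one]; rfl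
    have hD : metricDualAvg 1 Q ρ x = S := by simp [metricDualAvg, hSdef]
    rw [hAvg, hD]
    calc c = c * v / v := by
          rw [div_eq_mul_inv, mul_assoc, ENNReal.mul_inv_cancel hv0 hvt, mul_one]
    _ ≤ (∫⁻ z in Q, f z) * S / v := ENNReal.div_le_div_right h1 v
    _ = (∫⁻ z in Q, f z) / v * S := by
        rw [div_eq_mul_inv, div_eq_mul_inv]; ring
  · -- p > 1 : Hölder
    have hp' : 1 < p := lt_of_le_of_ne hp (Ne.symm hp1)
    set q := p / (p - 1) with hqdef
    have hpq : p.HolderConjugate q := Real.HolderConjugate.conjExponent hp'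
    have holder := ENNReal.lintegral_mul_le_Lp_mul_Lq (volume.restrict Q) hpq
      hfmeas.aemeasurable hgmeas.aemeasurable
    have hL : (∫⁻ z in Q, (f * g) z) = c * v := by
      simp only [Pi.mul_apply, hfg]; exact hconst
    set X := (∫⁻ z in Q, f z ^ p) ^ (1 / p) with hX
    set Y := (∫⁻ z in Q, (dualNormE (ρ z) x) ^ q) ^ (1 / q) with hY
    have hq0 : (0:ℝ) ≤ 1 / q := le_of_lt (one_div_pos.mpr hpq.symm.pos)
    have hp0 : (0:ℝ) ≤ 1 / p := le_of_lt (one_div_pos.mpr hpq.pos)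
    have hGY : (∫⁻ z in Q, g z ^ q) ^ (1 / q) ≤ Y := by
      refine ENNReal.rpow_le_rpow ?_ hq0
      exact lintegral_mono fun z => ENNReal.rpow_le_rpow (hgd z) hpq.symm.nonneg
    have h1 : c * v ≤ X * Y := by
      rw [← hL]
      exact holder.trans (mul_le_mul' le_rfl hGY)
    -- divide by v = v^(1/p) * v^(1/q)
    have hsum : 1 / p + 1 / q = (1:ℝ) := by
      rw [one_div, one_div]; exact hpq.inv_add_inv_eq_one
    have hvsplit : v = v ^ (1 / p) * v ^ (1 / q) := by
      rw [← ENNReal.rpow_add _ _ hv0 hvt, hsum, ENNReal.rpow_one]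
    have ha0 : v ^ (1 / p) ≠ 0 := by
      simp [ENNReal.rpow_eq_zero_iff, hv0, hvt]
    have hat : v ^ (1 / p) ≠ ∞ := by
      simp [ENNReal.rpow_eq_top_iff, hv0, hvt]
    have hA : metricAvg p Q ρ u = X / v ^ (1 / p) := by
      simp only [metricAvg, avgGauge, hX]
      rw [ENNReal.div_rpow_of_nonneg _ _ hp0]
    have hD : metricDualAvg p Q ρ x = Y / v ^ (1 / q) := by
      simp only [metricDualAvg, if_neg hp1, avgGauge, hY, hqdef]
      rw [ENNReal.div_rpow_of_nonneg _ _ (by rw [← hqdef]; exact hq0)]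
    rw [hA, hD]
    calc c = c * v / v := by
          rw [div_eq_mul_inv, mul_assoc, ENNReal.mul_inv_cancel hv0 hvt, mul_one]
    _ ≤ X * Y / v := ENNReal.div_le_div_right h1 v
    _ = X * Y / (v ^ (1 / p) * v ^ (1 / q)) := by rw [← hvsplit]
    _ = X / v ^ (1 / p) * (Y / v ^ (1 / q)) := by
          rw [div_eq_mul_inv, ENNReal.mul_inv (Or.inl ha0) (Or.inl hat),
            div_eq_mul_inv X, div_eq_mul_inv Y]
          exact mul_mul_mul_comm X Y _ _
end Aux3
section Aux4
open MeasureTheory ENNReal Matrix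

variable {n d : ℕ}

lemma matAct_clm (M : Matrix (Fin d) (Fin d) ℂ) (x : EuclideanSpace ℂ (Fin d)) :
    matAct M x = Matrix.toEuclideanCLM (𝕜 := ℂ) M x := rfl

lemma matAct_matAct (M N : Matrix (Fin d) (Fin d) ℂ) (x : EuclideanSpace ℂ (Fin d)) :
    matAct M (matAct N x) = matAct (M * N) x := by
  simp only [matAct_clm, _root_.map_mul, ContinuousLinearMap.mul_apply]

lemma matAct_one (x : EuclideanSpace ℂ (Fin d)) : matAct (1 : Matrix (Fin d) (Fin d) ℂ) x = x := by
  simp only [matAct_clm, _root_.map_one, ContinuousLinearMap.one_apply]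

lemma inner_matAct (M : Matrix (Fin d) (Fin d) ℂ) (v y : EuclideanSpace ℂ (Fin d)) :
    (inner ℂ (matAct M v) y : ℂ) = inner ℂ v (matAct Mᴴ y) := by
  rw [matAct_clm, matAct_clm, ← Matrix.star_eq_conjTranspose, map_star,
    ContinuousLinearMap.star_eq_adjoint]
  exact (ContinuousLinearMap.adjoint_inner_right _ v y).symm

lemma metricAvg_ne_zero {p : ℝ} (hp : 0 < p)
    {ρ : Cspace n → EuclideanSpace ℂ (Fin d) → ℝ} (hρ : IsMetric ρ)
    {Q : Set (Cspace n)} (hv0 : volume Q ≠ 0) (hvt : volume Q ≠ ∞)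
    {u : EuclideanSpace ℂ (Fin d)} (hu : u ≠ 0) :
    metricAvg p Q ρ u ≠ 0 := by
  have hmeas : Measurable fun z => ENNReal.ofReal (ρ z u) ^ p :=
    ENNReal.continuous_rpow_const.measurable.comp (hρ.2 u).ennreal_ofReal
  have hI : 0 < ∫⁻ z in Q, ENNReal.ofReal (ρ z u) ^ p := by
    rw [lintegral_pos_iff_support hmeas]
    have : Function.support (fun z => ENNReal.ofReal (ρ z u) ^ p) = Set.univ := by
      ext z
      simp only [Function.mem_support, Set.mem_univ, iff_true]
      have h1 : (0:ℝ≥0∞) < ENNReal.ofReal (ρ z u) := ENNReal.ofReal_pos.mpr ((hρ.1 z).1 u hu)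
      exact (ENNReal.rpow_pos h1 ofReal_ne_top).ne'
    rw [this]
    simpa using hv0.bot_lt
  simp only [metricAvg, avgGauge]
  rw [Ne, ENNReal.rpow_eq_zero_iff]
  rintro (⟨h, -⟩ | ⟨-, hneg⟩)
  · exact absurd (ENNReal.div_eq_zero_iff.mp h) (by push_neg; exact ⟨hI.ne', hvt⟩)
  · linarith [one_div_pos.mpr hp]

end Aux4
section Aux5
open MeasureTheory ENNReal Matrix

variable {n d : ℕ}

lemma volume_cube_ne_zero (u : Cspace n) {s : ℝ} (hs : 0 < s) : volume (cube u s) ≠ 0 := by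
  rw [volume_cube u s hs.le]
  exact pow_ne_zero _ (ENNReal.ofReal_pos.mpr hs).ne'

lemma volume_cube_ne_top (u : Cspace n) {s : ℝ} (hs : 0 < s) : volume (cube u s) ≠ ∞ := by
  rw [volume_cube u s hs.le]
  exact (pow_ne_top ofReal_ne_top)

variable {R : (Fin n → ℤ × ℤ) → Matrix (Fin d) (Fin d) ℂ}

lemma R_cancel (hRpos : ∀ m, (R m).PosDef) (m : Fin n → ℤ × ℤ) :
    (R m * (R m)⁻¹ = 1) ∧ ((R m)⁻¹ * R m = 1) := by
  have hdet : IsUnit (R m).det := (Matrix.isUnit_iff_isUnit_det _).mp (hRpos m).isUnit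
  exact ⟨Matrix.mul_nonsing_inv _ hdet, Matrix.nonsing_inv_mul _ hdet⟩

lemma lemma_i {p r : ℝ} {ρ : Cspace n → EuclideanSpace ℂ (Fin d) → ℝ}
    (hRpos : ∀ m, (R m).PosDef)
    (hR1 : ∀ m x, metricAvg p (cube (latticePt r m) r) ρ x ≤ ENNReal.ofReal ‖matAct (R m) x‖)
    (m : Fin n → ℤ × ℤ) (x : EuclideanSpace ℂ (Fin d)) :
    ENNReal.ofReal ‖matAct ((R m)⁻¹) x‖ ≤
      dualGaugeE (metricAvg p (cube (latticePt r m) r) ρ) x := by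
  by_cases hx : matAct ((R m)⁻¹) x = 0
  · simp [hx]
  set w := matAct ((R m)⁻¹) x with hwdef
  set v := matAct ((R m)⁻¹) w with hvdef
  have hRw : matAct (R m) v = w := by
    rw [hvdef, matAct_matAct, (R_cancel hRpos m).1, matAct_one]
  have hv0 : v ≠ 0 := by
    intro h
    apply hx
    rw [hwdef] at hRw ⊢
    rw [← hRw, h, matAct_clm, map_zero]
  have hinner : (inner ℂ v x : ℂ) = (‖w‖ : ℂ) ^ 2 := by
    rw [hvdef, inner_matAct, (hRpos m).1.inv.eq, ← hwdef, inner_self_eq_norm_sq_to_K]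
    norm_cast
  have hnum : (‖(inner ℂ v x : ℂ)‖₊ : ℝ≥0∞) = ENNReal.ofReal (‖w‖ ^ 2) := by
    rw [← enorm_eq_nnnorm, ← ofReal_norm, hinner, norm_pow, Complex.norm_real, norm_norm]
  have hGv : metricAvg p (cube (latticePt r m) r) ρ v ≤ ENNReal.ofReal ‖w‖ := by
    rw [← hRw]; exact hR1 m v
  refine le_trans ?_ (le_iSup_of_le v (le_iSup_of_le hv0 le_rfl))
  calc ENNReal.ofReal ‖w‖ = ENNReal.ofReal (‖w‖ ^ 2) / ENNReal.ofReal ‖w‖ := by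
        rw [← ENNReal.ofReal_div_of_pos (norm_pos_iff.mpr hx), sq,
          mul_div_cancel_right₀ _ (norm_ne_zero_iff.mpr hx)]
  _ ≤ (‖(inner ℂ v x : ℂ)‖₊ : ℝ≥0∞) / metricAvg p (cube (latticePt r m) r) ρ v := by
        rw [hnum]; exact ENNReal.div_le_div_left hGv _

lemma lemma_ii {p r : ℝ} (hp : 0 < p) (hr : 0 < r)
    {ρ : Cspace n → EuclideanSpace ℂ (Fin d) → ℝ} (hρ : IsMetric ρ)
    (hRpos : ∀ m, (R m).PosDef)
    (hR1 : ∀ m x, metricAvg p (cube (latticePt r m) r) ρ x ≤ ENNReal.ofReal ‖matAct (R m) x‖)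
    (hR2 : ∀ m x, ENNReal.ofReal ‖matAct (R m) x‖ ≤
      ENNReal.ofReal (Real.sqrt d) * metricAvg p (cube (latticePt r m) r) ρ x)
    (m : Fin n → ℤ × ℤ) (x : EuclideanSpace ℂ (Fin d)) :
    dualGaugeE (metricAvg p (cube (latticePt r m) r) ρ) x ≤
      ENNReal.ofReal (Real.sqrt d) * ENNReal.ofReal ‖matAct ((R m)⁻¹) x‖ := by
  refine iSup₂_le fun v hv => ?_
  have hNv0 : metricAvg p (cube (latticePt r m) r) ρ v ≠ 0 :=
    metricAvg_ne_zero hp hρ (volume_cube_ne_zero _ hr) (volume_cube_ne_top _ hr) hv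
  have hNvt : metricAvg p (cube (latticePt r m) r) ρ v ≠ ∞ :=
    ne_top_of_le_ne_top ofReal_ne_top (hR1 m v)
  rw [ENNReal.div_le_iff hNv0 hNvt]
  have hip : (inner ℂ v x : ℂ) = inner ℂ (matAct (R m) v) (matAct ((R m)⁻¹) x) := by
    rw [inner_matAct, (hRpos m).1.eq, matAct_matAct, (R_cancel hRpos m).1, matAct_one]
  have key : (‖(inner ℂ v x : ℂ)‖₊ : ℝ≥0∞) ≤
      ENNReal.ofReal ‖matAct ((R m)⁻¹) x‖ * ENNReal.ofReal ‖matAct (R m) v‖ := by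
    rw [← enorm_eq_nnnorm, ← ofReal_norm, hip, ← ENNReal.ofReal_mul (norm_nonneg _)]
    refine ENNReal.ofReal_le_ofReal ?_
    rw [mul_comm]
    exact norm_inner_le_norm _ _
  refine key.trans ?_
  calc ENNReal.ofReal ‖matAct ((R m)⁻¹) x‖ * ENNReal.ofReal ‖matAct (R m) v‖
      ≤ ENNReal.ofReal ‖matAct ((R m)⁻¹) x‖ *
        (ENNReal.ofReal (Real.sqrt d) * metricAvg p (cube (latticePt r m) r) ρ v) :=
        mul_le_mul_right (hR2 m v) _
  _ = ENNReal.ofReal (Real.sqrt d) * ENNReal.ofReal ‖matAct ((R m)⁻¹) x‖ *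
        metricAvg p (cube (latticePt r m) r) ρ v := by ring

end Aux5
section Aux6
open MeasureTheory ENNReal

variable {n d : ℕ}

lemma dualGauge_le_dualAvg {p : ℝ} (hp : 1 ≤ p)
    {ρ : Cspace n → EuclideanSpace ℂ (Fin d) → ℝ} (hρ : IsMetric ρ)
    {Q : Set (Cspace n)} (hv0 : volume Q ≠ 0) (hvt : volume Q ≠ ∞)
    (x : EuclideanSpace ℂ (Fin d)) :
    dualGaugeE (metricAvg p Q ρ) x ≤ metricDualAvg p Q ρ x := by
  refine iSup₂_le fun v hv => ?_
  by_cases hNt : metricAvg p Q ρ v = ∞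
  · simp [hNt]
  · have hN0 : metricAvg p Q ρ v ≠ 0 :=
      metricAvg_ne_zero (lt_of_lt_of_le one_pos hp) hρ hv0 hvt hv
    rw [ENNReal.div_le_iff hN0 hNt, mul_comm]
    exact pairing_le hp hρ Q hv0 hvt v x

lemma vol_cube3_le (u : Cspace n) {r : ℝ} (hr : 0 < r) :
    volume (cube u (3 * r)) ≤ ENNReal.ofReal ((3:ℝ) ^ (2 * n)) * volume (cube u r) ∧
    volume (cube u r) ≠ 0 ∧ volume (cube u (3 * r)) ≠ ∞ ∧ volume (cube u (3 * r)) ≠ 0 := by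
  have h3r : (0:ℝ) < 3 * r := by linarith
  refine ⟨?_, volume_cube_ne_zero u hr, volume_cube_ne_top u h3r, volume_cube_ne_zero u h3r⟩
  rw [volume_cube u _ h3r.le, volume_cube u _ hr.le, ENNReal.ofReal_mul (by norm_num),
    mul_pow, ← ENNReal.ofReal_pow (by norm_num)]

lemma dualGauge_metricAvg_big_le {p r : ℝ} (hp : 1 ≤ p) (hr : 0 < r)
    {ρ : Cspace n → EuclideanSpace ℂ (Fin d) → ℝ}
    (u : Cspace n) (hsub : cube u r ⊆ cube u (3 * r)) (x : EuclideanSpace ℂ (Fin d)) :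
    dualGaugeE (metricAvg p (cube u (3 * r)) ρ) x ≤
      ENNReal.ofReal ((3:ℝ) ^ (2 * n)) ^ (1 / p) * dualGaugeE (metricAvg p (cube u r) ρ) x := by
  obtain ⟨hK, hv0, hvt, hv'0⟩ := vol_cube3_le u hr
  set c := ENNReal.ofReal ((3:ℝ) ^ (2 * n)) ^ (1 / p) with hcdef
  have hc0 : c ≠ 0 := by
    rw [hcdef, Ne, ENNReal.rpow_eq_zero_iff]
    push_neg
    refine ⟨fun h => absurd h (by positivity), fun h => absurd h ofReal_ne_top⟩
  have hct : c ≠ ∞ := by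
    rw [hcdef, Ne, ENNReal.rpow_eq_top_iff]
    push_neg
    refine ⟨fun h => absurd h (by positivity), fun h => absurd h ofReal_ne_top⟩
  refine iSup₂_le fun v hv => ?_
  refine le_trans ?_ (mul_le_mul_right (le_iSup₂_of_le v hv le_rfl) c)
  have hle : metricAvg p (cube u r) ρ v ≤ c * metricAvg p (cube u (3 * r)) ρ v :=
    avgGauge_mono_subset (lt_of_lt_of_le one_pos hp) _ v hsub hv0 hvt hv'0 hK
  calc (‖(inner ℂ v x : ℂ)‖₊ : ℝ≥0∞) / metricAvg p (cube u (3 * r)) ρ v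
      = c * (‖(inner ℂ v x : ℂ)‖₊ : ℝ≥0∞) / (c * metricAvg p (cube u (3 * r)) ρ v) := by
        rw [ENNReal.mul_div_mul_left _ _ hc0 hct]
  _ ≤ c * (‖(inner ℂ v x : ℂ)‖₊ : ℝ≥0∞) / metricAvg p (cube u r) ρ v :=
        ENNReal.div_le_div_left hle _
  _ = c * ((‖(inner ℂ v x : ℂ)‖₊ : ℝ≥0∞) / metricAvg p (cube u r) ρ v) := by
        rw [mul_div_assoc]

lemma step_lemma {p r A : ℝ} (hp : 1 ≤ p) (hr : 0 < r) (hA : 0 ≤ A)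
    {ρ : Cspace n → EuclideanSpace ℂ (Fin d) → ℝ} (hρ : IsMetric ρ)
    (h3r : IsAprBound p (3 * r) ρ A)
    (u' u : Cspace n)
    (hadj : cube u' r ⊆ cube u (3 * r)) (hself : cube u r ⊆ cube u (3 * r))
    (x : EuclideanSpace ℂ (Fin d)) :
    metricDualAvg p (cube u' r) ρ x ≤
      ENNReal.ofReal ((3:ℝ) ^ (2 * n) * A) * dualGaugeE (metricAvg p (cube u r) ρ) x := by
  obtain ⟨hK, hv0, hvt, hv'0⟩ := vol_cube3_le u hr
  have hv0' : volume (cube u' r) ≠ 0 := volume_cube_ne_zero u' hr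
  set K := ENNReal.ofReal ((3:ℝ) ^ (2 * n)) with hKdef
  have hbig := dualGauge_metricAvg_big_le (n := n) (d := d) hp hr (ρ := ρ) u hself x
  have h3 := h3r u x
  have hofm : ENNReal.ofReal ((3:ℝ) ^ (2 * n) * A) = K * ENNReal.ofReal A := by
    rw [hKdef, ← ENNReal.ofReal_mul (by positivity)]
  by_cases hp1 : p = 1
  · subst hp1
    have hmono : metricDualAvg 1 (cube u' r) ρ x ≤ metricDualAvg 1 (cube u (3 * r)) ρ x := by
      simp only [metricDualAvg, if_pos rfl]
      exact essSup_mono_measure' (Measure.restrict_mono hadj le_rfl)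
    calc metricDualAvg 1 (cube u' r) ρ x ≤ metricDualAvg 1 (cube u (3 * r)) ρ x := hmono
    _ ≤ ENNReal.ofReal A * dualGaugeE (metricAvg 1 (cube u (3 * r)) ρ) x := h3
    _ ≤ ENNReal.ofReal A * (K ^ (1 / (1:ℝ)) * dualGaugeE (metricAvg 1 (cube u r) ρ) x) :=
        mul_le_mul_right hbig _
    _ = ENNReal.ofReal ((3:ℝ) ^ (2 * n) * A) * dualGaugeE (metricAvg 1 (cube u r) ρ) x := by
        rw [hofm]; norm_num [ENNReal.rpow_one]; ring
  · have hp' : 1 < p := lt_of_le_of_ne hp (Ne.symm hp1)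
    have hpq : p.HolderConjugate (p / (p - 1)) := Real.HolderConjugate.conjExponent hp'
    have hq0 : 0 < p / (p - 1) := hpq.symm.pos
    have hmono : metricDualAvg p (cube u' r) ρ x ≤
        K ^ (1 / (p / (p - 1))) * metricDualAvg p (cube u (3 * r)) ρ x := by
      simp only [metricDualAvg, if_neg hp1]
      have hvol' : volume (cube u' r) = volume (cube u r) := by
        rw [volume_cube _ _ hr.le, volume_cube _ _ hr.le]
      exact avgGauge_mono_subset hq0 _ x hadj hv0' hvt hv'0 (hvol' ▸ hK)
    have hsum : 1 / p + 1 / (p / (p - 1)) = (1:ℝ) := by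
      rw [one_div, one_div]; exact hpq.inv_add_inv_eq_one
    have hK0 : K ≠ 0 := by
      rw [hKdef]; exact (ENNReal.ofReal_pos.mpr (by positivity)).ne'
    have hKt : K ≠ ∞ := ofReal_ne_top
    calc metricDualAvg p (cube u' r) ρ x
        ≤ K ^ (1 / (p / (p - 1))) * metricDualAvg p (cube u (3 * r)) ρ x := hmono
    _ ≤ K ^ (1 / (p / (p - 1))) *
          (ENNReal.ofReal A * dualGaugeE (metricAvg p (cube u (3 * r)) ρ) x) :=
        mul_le_mul_right h3 _
    _ ≤ K ^ (1 / (p / (p - 1))) *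
          (ENNReal.ofReal A * (K ^ (1 / p) * dualGaugeE (metricAvg p (cube u r) ρ) x)) :=
        mul_le_mul_right (mul_le_mul_right hbig _) _
    _ = (K ^ (1 / (p / (p - 1))) * K ^ (1 / p)) * ENNReal.ofReal A *
          dualGaugeE (metricAvg p (cube u r) ρ) x := by ring
    _ = ENNReal.ofReal ((3:ℝ) ^ (2 * n) * A) * dualGaugeE (metricAvg p (cube u r) ρ) x := by
        rw [← ENNReal.rpow_add _ _ hK0 hKt, add_comm (1 / (p / (p - 1))), hsum,
          ENNReal.rpow_one, hofm]

end Aux6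
section Aux7
open MeasureTheory ENNReal

variable {n d : ℕ}

lemma int_abs_cast {a b : ℤ} (h : (a - b).natAbs ≤ 1) : |(a:ℝ) - b| ≤ 1 := by
  have h' : |a - b| ≤ (1:ℤ) := by rw [Int.abs_eq_natAbs]; exact_mod_cast h
  have : ((|a - b| : ℤ) : ℝ) ≤ 1 := by exact_mod_cast h'
  rw [Int.cast_abs] at this
  push_cast at this
  exact this

lemma cube_sub_self (u : Cspace n) {r : ℝ} (hr : 0 < r) : cube u r ⊆ cube u (3 * r) := by
  intro z hz j
  obtain ⟨h1, h2⟩ := hz j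
  constructor <;> [skip; skip] <;> linarith

lemma cube_adj {r : ℝ} (hr : 0 < r) (m m' : Fin n → ℤ × ℤ)
    (h : ∀ j, ((m j).1 - (m' j).1).natAbs ≤ 1 ∧ ((m j).2 - (m' j).2).natAbs ≤ 1) :
    cube (latticePt r m') r ⊆ cube (latticePt r m) (3 * r) := by
  intro z hz j
  obtain ⟨h1, h2⟩ := hz j
  obtain ⟨a1, a2⟩ := h j
  have e1 : (latticePt r m' j).re = r * ((m' j).1 : ℝ) := rfl
  have e2 : (latticePt r m' j).im = r * ((m' j).2 : ℝ) := rfl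
  have f1 : (latticePt r m j).re = r * ((m j).1 : ℝ) := rfl
  have f2 : (latticePt r m j).im = r * ((m j).2 : ℝ) := rfl
  rw [e1] at h1
  rw [e2] at h2
  have c1 : |((m j).1 : ℝ) - ((m' j).1 : ℝ)| ≤ 1 := int_abs_cast a1
  have c2 : |((m j).2 : ℝ) - ((m' j).2 : ℝ)| ≤ 1 := int_abs_cast a2
  have t1 := abs_sub_le (z j).re (r * ((m' j).1 : ℝ)) (r * ((m j).1 : ℝ))
  have t2 := abs_sub_le (z j).im (r * ((m' j).2 : ℝ)) (r * ((m j).2 : ℝ))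
  have s1 : |r * ((m' j).1 : ℝ) - r * ((m j).1 : ℝ)| ≤ r := by
    rw [← mul_sub, abs_mul, abs_of_pos hr, abs_sub_comm]
    calc r * |((m j).1 : ℝ) - ((m' j).1 : ℝ)| ≤ r * 1 := by
          exact mul_le_mul_of_nonneg_left c1 hr.le
    _ = r := mul_one r
  have s2 : |r * ((m' j).2 : ℝ) - r * ((m j).2 : ℝ)| ≤ r := by
    rw [← mul_sub, abs_mul, abs_of_pos hr, abs_sub_comm]
    calc r * |((m j).2 : ℝ) - ((m' j).2 : ℝ)| ≤ r * 1 := by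
          exact mul_le_mul_of_nonneg_left c2 hr.le
    _ = r := mul_one r
  refine ⟨?_, ?_⟩
  · rw [f1]; linarith
  · rw [f2]; linarith

end Aux7
section Aux8
open MeasureTheory ENNReal

variable {n d : ℕ}

lemma dualNormE_pos {g : EuclideanSpace ℂ (Fin d) → ℝ} {x : EuclideanSpace ℂ (Fin d)}
    (hx : x ≠ 0) : 0 < dualNormE g x := by
  refine lt_of_lt_of_le ?_ (dualNormE_ge g hx x)
  refine ENNReal.div_pos ?_ ofReal_ne_top
  simp only [Ne, ENNReal.coe_eq_zero, nnnorm_eq_zero]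
  rw [inner_self_eq_zero]
  exact hx

lemma metricDualAvg_pos {p : ℝ} (hp : 1 ≤ p)
    {ρ : Cspace n → EuclideanSpace ℂ (Fin d) → ℝ} (hρ : IsMetric ρ)
    {Q : Set (Cspace n)} (hq0 : volume Q ≠ 0) (hqt : volume Q ≠ ∞)
    {x : EuclideanSpace ℂ (Fin d)} (hx : x ≠ 0) :
    0 < metricDualAvg p Q ρ x := by
  have hne : volume.restrict Q ≠ 0 := by
    rw [Ne, Measure.restrict_eq_zero]; exact hq0
  haveI : (ae (volume.restrict Q)).NeBot := ae_neBot.mpr hne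
  rw [pos_iff_ne_zero]
  intro h0
  by_cases hp1 : p = 1
  · subst hp1
    simp only [metricDualAvg, eq_self_iff_true, if_true] at h0
    obtain ⟨z, hz⟩ := (ae_le_essSup (fun z => dualNormE (ρ z) x)
      (μ := volume.restrict Q)).exists
    rw [h0] at hz
    exact absurd (le_antisymm hz zero_le) (dualNormE_pos hx).ne'
  · have hq : 0 < p / (p - 1) := by
      have hp' : 1 < p := lt_of_le_of_ne hp (Ne.symm hp1)
      exact div_pos (by linarith) (by linarith)
    simp only [metricDualAvg, if_neg hp1, avgGauge] at h0
    rw [ENNReal.rpow_eq_zero_iff] at h0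
    rcases h0 with ⟨h0, -⟩ | ⟨-, hneg⟩
    · rw [ENNReal.div_eq_zero_iff] at h0
      rcases h0 with h0 | h0
      · -- the integral is zero, but the integrand has a positive measurable minorant
        set c : Cspace n → ℝ≥0∞ :=
          fun z => (‖(inner ℂ x x : ℂ)‖₊ : ℝ≥0∞) / ENNReal.ofReal (ρ z x) with hcdef
        have hcmeas : Measurable fun z => c z ^ (p / (p - 1)) :=
          ENNReal.continuous_rpow_const.measurable.comp
            (Measurable.div measurable_const (hρ.2 x).ennreal_ofReal)
        have hc0 : ∀ z, c z ≠ 0 := fun z => by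
          refine (ENNReal.div_pos ?_ ofReal_ne_top).ne'
          simp only [Ne, ENNReal.coe_eq_zero, nnnorm_eq_zero, inner_self_eq_zero]
          exact hx
        have hpos : 0 < ∫⁻ z in Q, c z ^ (p / (p - 1)) := by
          rw [lintegral_pos_iff_support hcmeas]
          have hsupp : Function.support (fun z => c z ^ (p / (p - 1))) = Set.univ := by
            ext z
            simp only [Function.mem_support, Set.mem_univ, iff_true]
            rw [Ne, ENNReal.rpow_eq_zero_iff]
            rintro (⟨h, -⟩ | ⟨-, hneg⟩)
            · exact hc0 z h
            · linarith
          rw [hsupp]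
          simpa using hq0.bot_lt
        have hmono : (∫⁻ z in Q, c z ^ (p / (p - 1))) ≤
            ∫⁻ z in Q, dualNormE (ρ z) x ^ (p / (p - 1)) :=
          lintegral_mono fun z => ENNReal.rpow_le_rpow (dualNormE_ge (ρ z) hx x) hq.le
        rw [h0] at hmono
        exact absurd (le_antisymm hmono zero_le) hpos.ne'
      · exact hqt h0
    · linarith [one_div_pos.mpr hq]

end Aux8
section Aux9
open MeasureTheory ENNReal

variable {n d : ℕ} {R : (Fin n → ℤ × ℤ) → Matrix (Fin d) (Fin d) ℂ}

lemma one_le_A (hd : 0 < d) {p r A : ℝ} (hp : 1 ≤ p) (hr : 0 < r) (hA : 0 ≤ A)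
    {ρ : Cspace n → EuclideanSpace ℂ (Fin d) → ℝ} (hρ : IsMetric ρ)
    (h3r : IsAprBound p (3 * r) ρ A)
    (hRpos : ∀ m, (R m).PosDef)
    (hR1 : ∀ m x, metricAvg p (cube (latticePt r m) r) ρ x ≤ ENNReal.ofReal ‖matAct (R m) x‖)
    (hR2 : ∀ m x, ENNReal.ofReal ‖matAct (R m) x‖ ≤
      ENNReal.ofReal (Real.sqrt d) * metricAvg p (cube (latticePt r m) r) ρ x) :
    (1:ℝ) ≤ A := by
  set m0 : Fin n → ℤ × ℤ := fun _ => (0, 0) with hm0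
  set u0 := latticePt r m0 with hu0
  set x : EuclideanSpace ℂ (Fin d) := EuclideanSpace.single (⟨0, hd⟩ : Fin d) (1:ℂ) with hxdef
  have hx : x ≠ 0 := by
    intro h
    have h1 : x (⟨0, hd⟩ : Fin d) = 1 := by simp [hxdef, EuclideanSpace.single_apply]
    rw [h] at h1
    simp at h1
  have h3rpos : (0:ℝ) < 3 * r := by linarith
  have hb0 : volume (cube u0 (3 * r)) ≠ 0 := volume_cube_ne_zero u0 h3rpos
  have hbt : volume (cube u0 (3 * r)) ≠ ∞ := volume_cube_ne_top u0 h3rpos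
  set t := dualGaugeE (metricAvg p (cube u0 (3 * r)) ρ) x with htdef
  have hDpos : 0 < metricDualAvg p (cube u0 (3 * r)) ρ x := metricDualAvg_pos hp hρ hb0 hbt hx
  have ht_le : t ≤ metricDualAvg p (cube u0 (3 * r)) ρ x := dualGauge_le_dualAvg hp hρ hb0 hbt x
  have hup : metricDualAvg p (cube u0 (3 * r)) ρ x ≤ ENNReal.ofReal A * t := h3r u0 x
  have htfin : t ≠ ∞ := by
    have h1 := dualGauge_metricAvg_big_le (n := n) (d := d) hp hr (ρ := ρ) u0
      (cube_sub_self u0 hr) x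
    have h2 := lemma_ii (lt_of_lt_of_le one_pos hp) hr hρ hRpos hR1 hR2 m0 x
    refine ne_top_of_le_ne_top ?_ (h1.trans (mul_le_mul_right h2 _))
    exact mul_ne_top (ENNReal.rpow_ne_top_of_nonneg (by positivity) ofReal_ne_top)
      (mul_ne_top ofReal_ne_top ofReal_ne_top)
  have ht0 : t ≠ 0 := by
    intro h
    rw [h, mul_zero] at hup
    exact absurd (le_antisymm hup zero_le) hDpos.ne'
  have hle : 1 * t ≤ ENNReal.ofReal A * t := by
    rw [one_mul]; exact ht_le.trans hup
  have h1A : (1:ℝ≥0∞) ≤ ENNReal.ofReal A := by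
    exact (ENNReal.mul_le_mul_iff_left ht0 htfin).mp hle
  exact ENNReal.one_le_ofReal.mp h1A

lemma sign_step {c : ℤ} (hc : c ≠ 0) : (c - c.sign).natAbs + 1 = c.natAbs := by
  rcases lt_trichotomy c 0 with h | h | h
  · rw [Int.sign_eq_neg_one_of_neg h]; omega
  · exact absurd h hc
  · rw [Int.sign_eq_one_of_pos h]; omega

lemma sign_natAbs_le (c : ℤ) : c.sign.natAbs ≤ 1 := by
  rcases lt_trichotomy c 0 with h | h | h
  · rw [Int.sign_eq_neg_one_of_neg h]; decide
  · rw [h]; decide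
  · rw [Int.sign_eq_one_of_pos h]; decide

end Aux9
section Aux10
open MeasureTheory ENNReal

variable {n d : ℕ} {R : (Fin n → ℤ × ℤ) → Matrix (Fin d) (Fin d) ℂ}

lemma chain_bound {p r A : ℝ} (hp : 1 ≤ p) (hr : 0 < r) (hA : 0 ≤ A)
    {ρ : Cspace n → EuclideanSpace ℂ (Fin d) → ℝ} (hρ : IsMetric ρ)
    (h3r : IsAprBound p (3 * r) ρ A) :
    ∀ k : ℕ, ∀ m m' : Fin n → ℤ × ℤ,
      (∑ j, (((m j).1 - (m' j).1).natAbs + ((m j).2 - (m' j).2).natAbs)) = k →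
      ∀ x, dualGaugeE (metricAvg p (cube (latticePt r m') r) ρ) x ≤
        ENNReal.ofReal ((3:ℝ) ^ (2 * n) * A) ^ k *
          dualGaugeE (metricAvg p (cube (latticePt r m) r) ρ) x := by
  intro k
  induction k with
  | zero =>
    intro m m' h x
    have hmm : m = m' := by
      funext j
      have hj : (((m j).1 - (m' j).1).natAbs + ((m j).2 - (m' j).2).natAbs) = 0 := by
        by_contra hc
        have : 0 < ∑ j', (((m j').1 - (m' j').1).natAbs + ((m j').2 - (m' j').2).natAbs) :=
          Finset.sum_pos' (fun _ _ => Nat.zero_le _) ⟨j, Finset.mem_univ j, Nat.pos_of_ne_zero hc⟩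
        omega
      have e1 : (m j).1 = (m' j).1 := by omega
      have e2 : (m j).2 = (m' j).2 := by omega
      exact Prod.ext e1 e2
    rw [hmm, pow_zero, one_mul]
  | succ k ih =>
    intro m m' h x
    have hex : ∃ j, (((m j).1 - (m' j).1).natAbs + ((m j).2 - (m' j).2).natAbs) ≠ 0 := by
      by_contra hc
      push_neg at hc
      rw [Finset.sum_eq_zero (fun j _ => hc j)] at h
      omega
    obtain ⟨j, hj⟩ := hex
    -- build intermediate lattice point m''
    by_cases h1 : (m j).1 ≠ (m' j).1
    case pos =>
      set c : ℤ := (m j).1 - (m' j).1 with hcdef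
      have hc : c ≠ 0 := sub_ne_zero.mpr h1
      set m'' : Fin n → ℤ × ℤ := Function.update m' j ((m' j).1 + c.sign, (m' j).2) with hm''
      have hoff : ∀ j', j' ≠ j → m'' j' = m' j' := fun j' hj' => Function.update_of_ne hj' _ _
      have hat : m'' j = ((m' j).1 + c.sign, (m' j).2) := Function.update_self _ _ _
      have hL : (∑ j', (((m j').1 - (m'' j').1).natAbs + ((m j').2 - (m'' j').2).natAbs)) = k := by
        have e1 := (Finset.sum_erase_add Finset.univ
          (fun j' => (((m j').1 - (m'' j').1).natAbs + ((m j').2 - (m'' j').2).natAbs))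
          (Finset.mem_univ j)).symm
        have e2 := (Finset.sum_erase_add Finset.univ
          (fun j' => (((m j').1 - (m' j').1).natAbs + ((m j').2 - (m' j').2).natAbs))
          (Finset.mem_univ j)).symm
        have erest : (∑ j' ∈ Finset.univ.erase j,
            (((m j').1 - (m'' j').1).natAbs + ((m j').2 - (m'' j').2).natAbs)) =
            ∑ j' ∈ Finset.univ.erase j,
              (((m j').1 - (m' j').1).natAbs + ((m j').2 - (m' j').2).natAbs) := by
          refine Finset.sum_congr rfl fun j' hj' => ?_
          rw [hoff j' (Finset.ne_of_mem_erase hj')]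
        have hstep : ((m j).1 - (m'' j).1).natAbs + 1 = ((m j).1 - (m' j).1).natAbs := by
          rw [hat]
          have : (m j).1 - ((m' j).1 + c.sign) = c - c.sign := by rw [hcdef]; ring
          rw [this]
          exact sign_step hc
        have hsame : ((m j).2 - (m'' j).2).natAbs = ((m j).2 - (m' j).2).natAbs := by rw [hat]
        rw [e1, erest]
        rw [e2] at h
        omega
      have hadj : ∀ j', ((m'' j').1 - (m' j').1).natAbs ≤ 1 ∧
          ((m'' j').2 - (m' j').2).natAbs ≤ 1 := by
        intro j'
        by_cases hj' : j' = j
        · subst hj'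
          rw [hat]
          constructor
          · simpa using sign_natAbs_le c
          · simp
        · rw [hoff j' hj']; simp
      exact calc dualGaugeE (metricAvg p (cube (latticePt r m') r) ρ) x
          ≤ metricDualAvg p (cube (latticePt r m') r) ρ x :=
            dualGauge_le_dualAvg hp hρ (volume_cube_ne_zero _ hr) (volume_cube_ne_top _ hr) x
        _ ≤ ENNReal.ofReal ((3:ℝ) ^ (2 * n) * A) *
              dualGaugeE (metricAvg p (cube (latticePt r m'') r) ρ) x :=
            step_lemma hp hr hA hρ h3r _ _ (cube_adj hr m'' m' hadj) (cube_sub_self _ hr) x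
        _ ≤ ENNReal.ofReal ((3:ℝ) ^ (2 * n) * A) *
              (ENNReal.ofReal ((3:ℝ) ^ (2 * n) * A) ^ k *
                dualGaugeE (metricAvg p (cube (latticePt r m) r) ρ) x) :=
            mul_le_mul_right (ih m m'' hL x) _
        _ = ENNReal.ofReal ((3:ℝ) ^ (2 * n) * A) ^ (k + 1) *
              dualGaugeE (metricAvg p (cube (latticePt r m) r) ρ) x := by
            rw [pow_succ]; ring
    case neg =>
      push_neg at h1
      have h2 : (m j).2 ≠ (m' j).2 := by
        intro h2
        apply hj
        rw [h1, h2]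
        simp
      set c : ℤ := (m j).2 - (m' j).2 with hcdef
      have hc : c ≠ 0 := sub_ne_zero.mpr h2
      set m'' : Fin n → ℤ × ℤ := Function.update m' j ((m' j).1, (m' j).2 + c.sign) with hm''
      have hoff : ∀ j', j' ≠ j → m'' j' = m' j' := fun j' hj' => Function.update_of_ne hj' _ _
      have hat : m'' j = ((m' j).1, (m' j).2 + c.sign) := Function.update_self _ _ _
      have hL : (∑ j', (((m j').1 - (m'' j').1).natAbs + ((m j').2 - (m'' j').2).natAbs)) = k := by
        have e1 := (Finset.sum_erase_add Finset.univ
          (fun j' => (((m j').1 - (m'' j').1).natAbs + ((m j').2 - (m'' j').2).natAbs))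
          (Finset.mem_univ j)).symm
        have e2 := (Finset.sum_erase_add Finset.univ
          (fun j' => (((m j').1 - (m' j').1).natAbs + ((m j').2 - (m' j').2).natAbs))
          (Finset.mem_univ j)).symm
        have erest : (∑ j' ∈ Finset.univ.erase j,
            (((m j').1 - (m'' j').1).natAbs + ((m j').2 - (m'' j').2).natAbs)) =
            ∑ j' ∈ Finset.univ.erase j,
              (((m j').1 - (m' j').1).natAbs + ((m j').2 - (m' j').2).natAbs) := by
          refine Finset.sum_congr rfl fun j' hj' => ?_
          rw [hoff j' (Finset.ne_of_mem_erase hj')]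
        have hstep : ((m j).2 - (m'' j).2).natAbs + 1 = ((m j).2 - (m' j).2).natAbs := by
          rw [hat]
          have : (m j).2 - ((m' j).2 + c.sign) = c - c.sign := by rw [hcdef]; ring
          rw [this]
          exact sign_step hc
        have hsame : ((m j).1 - (m'' j).1).natAbs = ((m j).1 - (m' j).1).natAbs := by rw [hat]
        rw [e1, erest]
        rw [e2] at h
        omega
      have hadj : ∀ j', ((m'' j').1 - (m' j').1).natAbs ≤ 1 ∧
          ((m'' j').2 - (m' j').2).natAbs ≤ 1 := by
        intro j'
        by_cases hj' : j' = j
        · subst hj'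
          rw [hat]
          constructor
          · simp
          · simpa using sign_natAbs_le c
        · rw [hoff j' hj']; simp
      exact calc dualGaugeE (metricAvg p (cube (latticePt r m') r) ρ) x
          ≤ metricDualAvg p (cube (latticePt r m') r) ρ x :=
            dualGauge_le_dualAvg hp hρ (volume_cube_ne_zero _ hr) (volume_cube_ne_top _ hr) x
        _ ≤ ENNReal.ofReal ((3:ℝ) ^ (2 * n) * A) *
              dualGaugeE (metricAvg p (cube (latticePt r m'') r) ρ) x :=
            step_lemma hp hr hA hρ h3r _ _ (cube_adj hr m'' m' hadj) (cube_sub_self _ hr) x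
        _ ≤ ENNReal.ofReal ((3:ℝ) ^ (2 * n) * A) *
              (ENNReal.ofReal ((3:ℝ) ^ (2 * n) * A) ^ k *
                dualGaugeE (metricAvg p (cube (latticePt r m) r) ρ) x) :=
            mul_le_mul_right (ih m m'' hL x) _
        _ = ENNReal.ofReal ((3:ℝ) ^ (2 * n) * A) ^ (k + 1) *
              dualGaugeE (metricAvg p (cube (latticePt r m) r) ρ) x := by
            rw [pow_succ]; ring

end Aux10
section Aux11
open MeasureTheory ENNReal

variable {n : ℕ}

lemma lattice_dist {r : ℝ} (hr : 0 < r) (m m' : Fin n → ℤ × ℤ) :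
    ((∑ j, (((m j).1 - (m' j).1).natAbs + ((m j).2 - (m' j).2).natAbs) : ℕ) : ℝ) ≤
      (Real.sqrt (2 * n) / r) * dist (latticePt r m) (latticePt r m') := by
  set c1 : Fin n → ℝ := fun j => ((m j).1 : ℝ) - ((m' j).1 : ℝ) with hc1
  set c2 : Fin n → ℝ := fun j => ((m j).2 : ℝ) - ((m' j).2 : ℝ) with hc2
  set S : ℝ := ∑ j, (c1 j ^ 2 + c2 j ^ 2) with hSdef
  have hS0 : 0 ≤ S := Finset.sum_nonneg fun j _ => by positivity
  -- distance computation
  have hdist : dist (latticePt r m) (latticePt r m') = r * Real.sqrt S := by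
    rw [EuclideanSpace.dist_eq]
    have hterm : ∀ j, dist (latticePt r m j) (latticePt r m' j) ^ 2 =
        r ^ 2 * (c1 j ^ 2 + c2 j ^ 2) := by
      intro j
      rw [Complex.dist_eq_re_im]
      rw [Real.sq_sqrt (by positivity)]
      have e1 : (latticePt r m j).re = r * ((m j).1 : ℝ) := rfl
      have e2 : (latticePt r m j).im = r * ((m j).2 : ℝ) := rfl
      have e3 : (latticePt r m' j).re = r * ((m' j).1 : ℝ) := rfl
      have e4 : (latticePt r m' j).im = r * ((m' j).2 : ℝ) := rfl
      rw [e1, e2, e3, e4, hc1, hc2]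
      ring
    rw [Finset.sum_congr rfl fun j _ => hterm j, ← Finset.mul_sum, ← hSdef,
      Real.sqrt_mul (by positivity), Real.sqrt_sq hr.le]
  -- cast of the ℓ¹ sum
  have hcast : ((∑ j, (((m j).1 - (m' j).1).natAbs + ((m j).2 - (m' j).2).natAbs) : ℕ) : ℝ) =
      ∑ j, (|c1 j| + |c2 j|) := by
    push_cast [Nat.cast_natAbs]
    rfl
  -- Cauchy–Schwarz
  have hCS : (∑ j, (|c1 j| + |c2 j|)) ^ 2 ≤ (2 * n) * S := by
    calc (∑ j, (|c1 j| + |c2 j|)) ^ 2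
        ≤ (Finset.univ.card : ℝ) * ∑ j, (|c1 j| + |c2 j|) ^ 2 :=
          sq_sum_le_card_mul_sum_sq
    _ ≤ (n : ℝ) * ∑ j, 2 * (c1 j ^ 2 + c2 j ^ 2) := by
        rw [Finset.card_univ, Fintype.card_fin]
        refine mul_le_mul_of_nonneg_left (Finset.sum_le_sum fun j _ => ?_) (by positivity)
        nlinarith [sq_abs (c1 j), sq_abs (c2 j), sq_nonneg (|c1 j| - |c2 j|)]
    _ = (2 * n) * S := by rw [← Finset.mul_sum, ← hSdef]; ring
  have hsumnn : 0 ≤ ∑ j, (|c1 j| + |c2 j|) := Finset.sum_nonneg fun j _ => by positivity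
  have hle : (∑ j, (|c1 j| + |c2 j|)) ≤ Real.sqrt (2 * n) * Real.sqrt S := by
    rw [← Real.sqrt_mul (by positivity)]
    rw [show ∑ j, (|c1 j| + |c2 j|) = Real.sqrt ((∑ j, (|c1 j| + |c2 j|)) ^ 2) by
      rw [Real.sqrt_sq hsumnn]]
    exact Real.sqrt_le_sqrt hCS
  rw [hcast, hdist]
  calc (∑ j, (|c1 j| + |c2 j|)) ≤ Real.sqrt (2 * n) * Real.sqrt S := hle
  _ = Real.sqrt (2 * n) / r * (r * Real.sqrt S) := by field_simp
end Aux11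
section Aux11b
open MeasureTheory ENNReal Matrix
variable {d : ℕ}

set_option synthInstance.maxHeartbeats 1000000 in
lemma matOpNorm_star (M : Matrix (Fin d) (Fin d) ℂ) : matOpNorm Mᴴ = matOpNorm M := by
  unfold matOpNorm
  rw [← Matrix.star_eq_conjTranspose, map_star, ContinuousLinearMap.star_eq_adjoint]
  exact ContinuousLinearMap.adjoint.norm_map _

lemma matOpNorm_le {M : Matrix (Fin d) (Fin d) ℂ} {C : ℝ} (hC : 0 ≤ C)
    (h : ∀ w, ‖matAct M w‖ ≤ C * ‖w‖) : matOpNorm M ≤ C :=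
  ContinuousLinearMap.opNorm_le_bound _ hC fun w => by rw [← matAct_clm]; exact h w

end Aux11b
/-- Lemma `nunu'`, second part: if `ρ` is an `A_{p,3r}`-metric with
reducing operators `R_{Q_r(ν)}` for `ρ_{p,Q_r(ν)}`, then for all `ν, ν' ∈ rℤ^{2n}`,
`‖R_{Q_r(ν)} R_{Q_r(ν')}⁻¹‖ ≤ √d (3^{2n} A_{p,3r}(ρ))^{(√(2n)/r)|ν-ν'|}`. -/
theorem stmt14 {n d : ℕ} (hn : 0 < n) (hd : 0 < d) (r p : ℝ) (hr : 0 < r) (hp : 1 ≤ p)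
    (ρ : Cspace n → EuclideanSpace ℂ (Fin d) → ℝ) (hρ : IsMetric ρ)
    (A : ℝ) (hA : 0 ≤ A) (h3r : IsAprBound p (3 * r) ρ A)
    (R : (Fin n → ℤ × ℤ) → Matrix (Fin d) (Fin d) ℂ)
    (hRpos : ∀ m, (R m).PosDef)
    (hR : ∀ m x, metricAvg p (cube (latticePt r m) r) ρ x ≤
        ENNReal.ofReal ‖matAct (R m) x‖ ∧
      ENNReal.ofReal ‖matAct (R m) x‖ ≤
        ENNReal.ofReal (Real.sqrt d) * metricAvg p (cube (latticePt r m) r) ρ x) :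
    ∀ m m' : Fin n → ℤ × ℤ,
      matOpNorm (R m * (R m')⁻¹) ≤
        Real.sqrt d * ((3 : ℝ) ^ (2 * n) * A) ^
          ((Real.sqrt (2 * n) / r) * dist (latticePt r m) (latticePt r m')) := by
  intro m m'
  have hp0 : (0:ℝ) < p := lt_of_lt_of_le one_pos hp
  set B : ℝ := (3:ℝ) ^ (2 * n) * A with hBdef
  have hA1 : (1:ℝ) ≤ A := one_le_A hd hp hr hA hρ h3r hRpos
    (fun m x => (hR m x).1) (fun m x => (hR m x).2)
  have h3n : (1:ℝ) ≤ (3:ℝ) ^ (2 * n) := one_le_pow₀ (by norm_num)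
  have hB1 : (1:ℝ) ≤ B := by nlinarith
  have hB0 : (0:ℝ) ≤ B := by linarith
  set k : ℕ := ∑ j, (((m j).1 - (m' j).1).natAbs + ((m j).2 - (m' j).2).natAbs) with hkdef
  have hchain := chain_bound hp hr hA hρ h3r k m m' rfl
  have hpt : ∀ x, ‖matAct ((R m')⁻¹) x‖ ≤
      (Real.sqrt d * B ^ k) * ‖matAct ((R m)⁻¹) x‖ := by
    intro x
    have h1 := lemma_i hRpos (fun m x => (hR m x).1) m' x
    have h2 := hchain x
    have h3 := lemma_ii hp0 hr hρ hRpos (fun m x => (hR m x).1) (fun m x => (hR m x).2) m x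
    have hconst : ENNReal.ofReal ((Real.sqrt d * B ^ k) * ‖matAct ((R m)⁻¹) x‖) =
        ENNReal.ofReal ((3:ℝ) ^ (2 * n) * A) ^ k *
          (ENNReal.ofReal (Real.sqrt d) * ENNReal.ofReal ‖matAct ((R m)⁻¹) x‖) := by
      rw [ENNReal.ofReal_mul (by positivity : (0:ℝ) ≤ Real.sqrt d * B ^ k),
        ENNReal.ofReal_mul (Real.sqrt_nonneg (d:ℝ)), ENNReal.ofReal_pow hB0, hBdef]
      ring
    have hE : ENNReal.ofReal ‖matAct ((R m')⁻¹) x‖ ≤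
        ENNReal.ofReal ((Real.sqrt d * B ^ k) * ‖matAct ((R m)⁻¹) x‖) := by
      rw [hconst]
      exact h1.trans (h2.trans (mul_le_mul_right h3 _))
    exact (ENNReal.ofReal_le_ofReal_iff (by positivity)).mp hE
  have hgeo : (k:ℝ) ≤ (Real.sqrt (2 * n) / r) * dist (latticePt r m) (latticePt r m') :=
    lattice_dist hr m m'
  have hmono : Real.sqrt d * B ^ k ≤
      Real.sqrt d * B ^ ((Real.sqrt (2 * n) / r) * dist (latticePt r m) (latticePt r m')) := by
    refine mul_le_mul_of_nonneg_left ?_ (Real.sqrt_nonneg _)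
    rw [← Real.rpow_natCast B k]
    exact Real.rpow_le_rpow_of_exponent_le hB1 hgeo
  -- operator norm via the adjoint
  have hermit : Matrix.conjTranspose (R m * (R m')⁻¹) = (R m')⁻¹ * R m := by
    rw [Matrix.conjTranspose_mul, (hRpos m).1.eq, (hRpos m').1.inv.eq]
  have hC0 : (0:ℝ) ≤ Real.sqrt d *
      B ^ ((Real.sqrt (2 * n) / r) * dist (latticePt r m) (latticePt r m')) :=
    mul_nonneg (Real.sqrt_nonneg _) (Real.rpow_nonneg hB0 _)
  calc matOpNorm (R m * (R m')⁻¹)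
      = matOpNorm (Matrix.conjTranspose (R m * (R m')⁻¹)) := (matOpNorm_star _).symm
  _ = matOpNorm ((R m')⁻¹ * R m) := by rw [hermit]
  _ ≤ Real.sqrt d * B ^ ((Real.sqrt (2 * n) / r) * dist (latticePt r m) (latticePt r m')) := by
      refine matOpNorm_le hC0 fun w => ?_
      rw [← matAct_matAct]
      have hback : matAct ((R m)⁻¹) (matAct (R m) w) = w := by
        rw [matAct_matAct, (R_cancel hRpos m).2, matAct_one]
      calc ‖matAct ((R m')⁻¹) (matAct (R m) w)‖
          ≤ (Real.sqrt d * B ^ k) * ‖matAct ((R m)⁻¹) (matAct (R m) w)‖ := hpt _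
      _ = (Real.sqrt d * B ^ k) * ‖w‖ := by rw [hback]
      _ ≤ (Real.sqrt d *
            B ^ ((Real.sqrt (2 * n) / r) * dist (latticePt r m) (latticePt r m'))) * ‖w‖ :=
          mul_le_mul_of_nonneg_right hmono (norm_nonneg w)
end

section
/- Let α,r>0, u∈ℂⁿ, and x∈ℂᵈ, and set f = χ_{Q_r(u)}·k^α_u·x. Then P_{α,u,r}f = c_{α,u,r}·f, where c_{α,u,r} = ∫_{Q_r(u)} |k^α_u(z)|² dλ_α(z) satisfies (αr²/π)ⁿ e^{-nαr²/2} ≤ c_{α,u,r} ≤ 1. -/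
open MeasureTheory ENNReal
open scoped ComplexOrder

open MeasureTheory Real

noncomputable section AuxStmt17

/-- 1D gaussian integral over a symmetric interval. -/
def gaussI (α r : ℝ) : ℝ := ∫ t in (-(r/2))..(r/2), Real.exp (-α * t ^ 2)

lemma gaussI_nonneg (α r : ℝ) (hr : 0 < r) : 0 ≤ gaussI α r :=
  intervalIntegral.integral_nonneg (by linarith) (fun t _ => (Real.exp_pos _).le)

lemma gaussI_sq_le (α r : ℝ) (hα : 0 < α) (hr : 0 < r) : gaussI α r ^ 2 ≤ Real.pi / α := by
  have h1 : gaussI α r ≤ ∫ t : ℝ, Real.exp (-α * t ^ 2) := by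
    rw [gaussI, intervalIntegral.integral_of_le (by linarith)]
    exact setIntegral_le_integral (integrable_exp_neg_mul_sq hα)
      (Filter.Eventually.of_forall fun t => (Real.exp_pos _).le)
  rw [integral_gaussian] at h1
  calc gaussI α r ^ 2 ≤ Real.sqrt (Real.pi / α) ^ 2 :=
        pow_le_pow_left₀ (gaussI_nonneg α r hr) h1 2
    _ = Real.pi / α := Real.sq_sqrt (by positivity)

lemma gaussI_ge (α r : ℝ) (hα : 0 < α) (hr : 0 < r) :
    r * Real.exp (-α * r ^ 2 / 4) ≤ gaussI α r := by
  have hle : -(r/2) ≤ r/2 := by linarith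
  have h1 : (∫ _t in (-(r/2))..(r/2), Real.exp (-α * r ^ 2 / 4)) ≤ gaussI α r := by
    apply intervalIntegral.integral_mono_on hle
    · exact intervalIntegrable_const
    · exact (Continuous.intervalIntegrable (by continuity) _ _)
    · intro t ht
      apply Real.exp_le_exp.2
      rcases ht with ⟨h2, h3⟩
      nlinarith [mul_le_mul_of_nonneg_left (sq_le_sq' h2 h3) hα.le]
  rw [intervalIntegral.integral_const, smul_eq_mul] at h1
  calc r * Real.exp (-α * r ^ 2 / 4) = (r/2 - -(r/2)) * Real.exp (-α * r ^ 2 / 4) := by ring_nf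
    _ ≤ gaussI α r := h1

/-- cell in ℂ -/
def cellSet (c : ℂ) (r : ℝ) : Set ℂ := {z | |z.re - c.re| ≤ r/2 ∧ |z.im - c.im| ≤ r/2}

lemma cellSet_measurable (c : ℂ) (r : ℝ) : MeasurableSet (cellSet c r) :=
  (measurableSet_le ((Complex.measurable_re.sub measurable_const).abs) measurable_const).inter
    (measurableSet_le ((Complex.measurable_im.sub measurable_const).abs) measurable_const)

lemma oneD_integral (α r a : ℝ) (hr : 0 < r) :
    ∫ x in Set.Icc (a - r/2) (a + r/2), Real.exp (-α * (x - a) ^ 2) = gaussI α r := by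
  rw [MeasureTheory.integral_Icc_eq_integral_Ioc,
    ← intervalIntegral.integral_of_le (by linarith),
    intervalIntegral.integral_comp_sub_right (fun t => Real.exp (-α * t ^ 2)) a,
    show a - r/2 - a = -(r/2) by ring, show a + r/2 - a = r/2 by ring, gaussI]

lemma cell_integral (α r : ℝ) (hr : 0 < r) (c : ℂ) :
    ∫ z in cellSet c r, Real.exp (-α * ‖z - c‖ ^ 2) = gaussI α r ^ 2 := by
  have hnorm : ∀ z : ℂ, ‖z - c‖ ^ 2 = (z.re - c.re) ^ 2 + (z.im - c.im) ^ 2 := by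
    intro z
    rw [Complex.sq_norm, Complex.normSq_apply, Complex.sub_re,
      Complex.sub_im]
    ring
  set T : Set (ℝ × ℝ) :=
    (Set.Icc (c.re - r/2) (c.re + r/2)) ×ˢ (Set.Icc (c.im - r/2) (c.im + r/2)) with hT
  have hpre : cellSet c r = Complex.measurableEquivRealProd ⁻¹' T := by
    ext z
    simp only [cellSet, Set.mem_setOf_eq, hT, Set.mem_preimage, Set.mem_prod, Set.mem_Icc,
      Complex.measurableEquivRealProd_apply]
    constructor
    · rintro ⟨h1, h2⟩
      rw [abs_le] at h1 h2
      exact ⟨⟨by linarith [h1.1], by linarith [h1.2]⟩, ⟨by linarith [h2.1], by linarith [h2.2]⟩⟩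
    · rintro ⟨⟨h1, h2⟩, h3, h4⟩
      constructor <;> rw [abs_le] <;> constructor <;> linarith
  set g : ℝ × ℝ → ℝ := fun p => Real.exp (-α * (p.1 - c.re) ^ 2) * Real.exp (-α * (p.2 - c.im) ^ 2)
    with hg
  have hfg : ∀ z : ℂ, Real.exp (-α * ‖z - c‖ ^ 2) = g (Complex.measurableEquivRealProd z) := by
    intro z
    rw [hg]
    simp only [Complex.measurableEquivRealProd_apply]
    rw [← Real.exp_add, hnorm]
    ring_nf
  calc ∫ z in cellSet c r, Real.exp (-α * ‖z - c‖ ^ 2)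
      = ∫ z in Complex.measurableEquivRealProd ⁻¹' T, g (Complex.measurableEquivRealProd z) := by
        rw [← hpre]; exact setIntegral_congr_fun (hpre ▸ cellSet_measurable c r) fun z _ => hfg z
    _ = ∫ p in T, g p :=
        Complex.volume_preserving_equiv_real_prod.setIntegral_preimage_emb
          Complex.measurableEquivRealProd.measurableEmbedding g T
    _ = (∫ x in Set.Icc (c.re - r/2) (c.re + r/2), Real.exp (-α * (x - c.re) ^ 2)) *
        (∫ y in Set.Icc (c.im - r/2) (c.im + r/2), Real.exp (-α * (y - c.im) ^ 2)) := by
        rw [hT, hg]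
        exact setIntegral_prod_mul (fun x => Real.exp (-α * (x - c.re) ^ 2))
          (fun y => Real.exp (-α * (y - c.im) ^ 2)) _ _
    _ = gaussI α r ^ 2 := by rw [oneD_integral α r _ hr, oneD_integral α r _ hr, sq]

end AuxStmt17

noncomputable section Aux2

open MeasureTheory Real

variable {n : ℕ}

lemma cube_eq_pi_s17 (u : Cspace n) (r : ℝ) :
    cube u r = WithLp.ofLp ⁻¹' Set.univ.pi (fun j => cellSet (u j) r) := by
  ext w
  exact ⟨fun h j _ => h j, fun h j => h j (Set.mem_univ j)⟩

lemma cube_measurable (u : Cspace n) (r : ℝ) : MeasurableSet (cube u r) := by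
  rw [cube_eq_pi_s17]
  exact (MeasurableSet.univ_pi fun j => cellSet_measurable (u j) r).preimage (WithLp.measurable_ofLp 2 _)

lemma norm_sub_sq_sum (u w : Cspace n) : ‖w - u‖ ^ 2 = ∑ j, ‖w j - u j‖ ^ 2 := by
  rw [EuclideanSpace.norm_eq, Real.sq_sqrt (by positivity)]
  exact Finset.sum_congr rfl fun j _ => by rw [PiLp.sub_apply]

lemma cube_gauss_integral (α r : ℝ) (hα : 0 < α) (hr : 0 < r) (u : Cspace n) :
    ∫ w in cube u r, Real.exp (-α * ‖w - u‖ ^ 2) = (gaussI α r ^ 2) ^ n := by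
  have hnorm : ∀ w : Cspace n,
      Real.exp (-α * ‖w - u‖ ^ 2) = ∏ j, Real.exp (-α * ‖w j - u j‖ ^ 2) := by
    intro w
    rw [← Real.exp_sum]
    congr 1
    rw [norm_sub_sq_sum u w, Finset.mul_sum]
  have hind : ∀ w : Fin n → ℂ,
      Set.indicator (cube u r)
        (fun w : Cspace n => ∏ j, Real.exp (-α * ‖w j - u j‖ ^ 2)) (WithLp.toLp 2 w)
      = ∏ j, Set.indicator (cellSet (u j) r) (fun z => Real.exp (-α * ‖z - u j‖ ^ 2)) (w j) := by
    intro w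
    by_cases hw : w ∈ Set.univ.pi fun j => cellSet (u j) r
    · rw [Set.indicator_of_mem (show WithLp.toLp 2 w ∈ cube u r from fun j => hw j (Set.mem_univ j))]
      exact Finset.prod_congr rfl fun j _ =>
        (Set.indicator_of_mem (hw j (Set.mem_univ j))
          (fun z => Real.exp (-α * ‖z - u j‖ ^ 2))).symm
    · rw [Set.indicator_of_notMem (show WithLp.toLp 2 w ∉ cube u r from fun h => hw fun j _ => h j)]
      rw [Set.mem_univ_pi] at hw
      push_neg at hw
      obtain ⟨j, hj⟩ := hw
      exact (Finset.prod_eq_zero (Finset.mem_univ j) (Set.indicator_of_notMem hj _)).symm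
  have hpim : MeasurableSet ((Set.univ.pi fun j => cellSet (u j) r) : Set (Fin n → ℂ)) :=
    MeasurableSet.univ_pi fun j => cellSet_measurable (u j) r
  calc ∫ w in cube u r, Real.exp (-α * ‖w - u‖ ^ 2)
      = ∫ w in cube u r, ∏ j, Real.exp (-α * ‖w j - u j‖ ^ 2) :=
        setIntegral_congr_fun (cube_measurable u r) fun w _ => hnorm w
    _ = ∫ w : Cspace n, Set.indicator (cube u r)
          (fun w : Cspace n => ∏ j, Real.exp (-α * ‖w j - u j‖ ^ 2)) w :=
        (integral_indicator (cube_measurable u r)).symm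
    _ = ∫ w : Fin n → ℂ, Set.indicator (cube u r)
          (fun w : Cspace n => ∏ j, Real.exp (-α * ‖w j - u j‖ ^ 2)) (WithLp.toLp 2 w) := by
        exact integral_map_equiv (MeasurableEquiv.toLp 2 (Fin n → ℂ)) _
    _ = ∫ w : Fin n → ℂ,
          ∏ j, Set.indicator (cellSet (u j) r) (fun z => Real.exp (-α * ‖z - u j‖ ^ 2)) (w j) := by
        exact integral_congr_ae (Filter.Eventually.of_forall hind)
    _ = ∏ j, ∫ z : ℂ, Set.indicator (cellSet (u j) r) (fun z => Real.exp (-α * ‖z - u j‖ ^ 2)) z :=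
        MeasureTheory.integral_fintype_prod_eq_prod (ι := Fin n)
          (fun j z => Set.indicator (cellSet (u j) r) (fun z => Real.exp (-α * ‖z - u j‖ ^ 2)) z)
    _ = ∏ _j : Fin n, gaussI α r ^ 2 := by
        exact Finset.prod_congr rfl fun j _ => by
          rw [integral_indicator (cellSet_measurable (u j) r), cell_integral α r hr (u j)]
    _ = (gaussI α r ^ 2) ^ n := by rw [Finset.prod_const, Finset.card_univ, Fintype.card_fin]

lemma gauss_kernel_eq (α : ℝ) (u w : Cspace n) :
    gaussDensity α w * ‖fockKernel α u w‖ ^ 2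
      = (α / Real.pi) ^ n * Real.exp (-α * ‖w - u‖ ^ 2) := by
  rw [gaussDensity, fockKernel, Complex.norm_exp]
  have hre : ((α : ℂ) * (inner ℂ u w : ℂ) - ((α / 2 * ‖u‖ ^ 2 : ℝ) : ℂ)).re
      = α * (inner ℂ u w : ℂ).re - α / 2 * ‖u‖ ^ 2 := by
    simp [Complex.sub_re, Complex.mul_re, Complex.ofReal_re, Complex.ofReal_im,
      ← Complex.ofReal_pow]
  rw [hre]
  have hsq : ‖w - u‖ ^ 2 = ‖w‖ ^ 2 - 2 * (inner ℂ u w : ℂ).re + ‖u‖ ^ 2 := by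
    have h := norm_sub_sq (𝕜 := ℂ) w u
    have h2 : (inner (𝕜 := ℂ) w u).re = (inner (𝕜 := ℂ) u w).re := by
      exact inner_re_symm (𝕜 := ℂ) w u
    simp only [RCLike.re_to_complex] at h
    rw [h, h2]
  have hexp2 : ∀ b : ℝ, Real.exp b ^ 2 = Real.exp (b + b) := fun b => by
    rw [sq, ← Real.exp_add]
  rw [mul_assoc, hexp2, ← Real.exp_add]
  congr 1
  rw [hsq]
  ring

end Aux2

/-- for `f = χ_{Q_r(u)} k^α_u x` one has `P_{α,u,r} f = c_{α,u,r} f`,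
where `c_{α,u,r} = ∫_{Q_r(u)} |k^α_u|² dλ_α` satisfies
`(αr²/π)ⁿ e^{-nαr²/2} ≤ c_{α,u,r} ≤ 1`. -/
theorem stmt17 {n d : ℕ} (hn : 0 < n) (hd : 0 < d) (α r : ℝ) (hα : 0 < α) (hr : 0 < r)
    (u : Cspace n) (x : EuclideanSpace ℂ (Fin d)) :
    (∀ z : Cspace n,
      cubeProj α u r (fun w => Set.indicator (cube u r) (fockKernel α u) w • x) z =
        (∫ w in cube u r, gaussDensity α w * ‖fockKernel α u w‖ ^ 2) •
          (Set.indicator (cube u r) (fockKernel α u) z • x)) ∧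
    (α * r ^ 2 / Real.pi) ^ n * Real.exp (-(n * α * r ^ 2) / 2) ≤
      (∫ w in cube u r, gaussDensity α w * ‖fockKernel α u w‖ ^ 2) ∧
    (∫ w in cube u r, gaussDensity α w * ‖fockKernel α u w‖ ^ 2) ≤ 1 := by
  
  have hc : (∫ w in cube u r, gaussDensity α w * ‖fockKernel α u w‖ ^ 2)
      = ((α / Real.pi) * gaussI α r ^ 2) ^ n := by
    calc (∫ w in cube u r, gaussDensity α w * ‖fockKernel α u w‖ ^ 2)
        = ∫ w in cube u r, (α / Real.pi) ^ n * Real.exp (-α * ‖w - u‖ ^ 2) :=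
          setIntegral_congr_fun (cube_measurable u r) fun w _ => gauss_kernel_eq α u w
      _ = (α / Real.pi) ^ n * ∫ w in cube u r, Real.exp (-α * ‖w - u‖ ^ 2) :=
          integral_const_mul _ _
      _ = (α / Real.pi) ^ n * (gaussI α r ^ 2) ^ n := by rw [cube_gauss_integral α r hα hr u]
      _ = ((α / Real.pi) * gaussI α r ^ 2) ^ n := (mul_pow _ _ n).symm
  refine ⟨?_, ?_, ?_⟩
  · intro z
    have hint : (∫ ζ in cube u r, gaussDensity α ζ •
        ((starRingEnd ℂ) (fockKernel α u ζ) • (Set.indicator (cube u r) (fockKernel α u) ζ • x)))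
        = (∫ w in cube u r, gaussDensity α w * ‖fockKernel α u w‖ ^ 2) • x := by
      rw [← integral_smul_const]
      refine setIntegral_congr_fun (cube_measurable u r) fun ζ hζ => ?_
      rw [Set.indicator_of_mem hζ, smul_smul]
      have hconj : (starRingEnd ℂ) (fockKernel α u ζ) * fockKernel α u ζ
          = ((‖fockKernel α u ζ‖ ^ 2 : ℝ) : ℂ) := by
        rw [mul_comm, Complex.mul_conj]
        exact congrArg _ (Complex.sq_norm _).symm
      rw [hconj, Complex.coe_smul, smul_smul]
    simp only [cubeProj]
    rw [hint]
    by_cases hz : z ∈ cube u r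
    · rw [Set.indicator_of_mem hz, Set.indicator_of_mem hz, smul_comm]
    · rw [Set.indicator_of_notMem hz, Set.indicator_of_notMem hz, zero_smul, smul_zero]
  · rw [hc]
    have hIl : r * Real.exp (-α * r ^ 2 / 4) ≤ gaussI α r := gaussI_ge α r hα hr
    have h0 : (0:ℝ) ≤ r * Real.exp (-α * r ^ 2 / 4) := by positivity
    have hsq : (r * Real.exp (-α * r ^ 2 / 4)) ^ 2 ≤ gaussI α r ^ 2 :=
      pow_le_pow_left₀ h0 hIl 2
    have hexp : (r * Real.exp (-α * r ^ 2 / 4)) ^ 2 = r ^ 2 * Real.exp (-(α * r ^ 2) / 2) := by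
      rw [mul_pow]
      congr 1
      rw [sq, ← Real.exp_add]
      congr 1
      ring
    have hbase : α * r ^ 2 / Real.pi * Real.exp (-(α * r ^ 2) / 2)
        ≤ α / Real.pi * gaussI α r ^ 2 := by
      calc α * r ^ 2 / Real.pi * Real.exp (-(α * r ^ 2) / 2)
          = α / Real.pi * (r ^ 2 * Real.exp (-(α * r ^ 2) / 2)) := by ring
        _ = α / Real.pi * (r * Real.exp (-α * r ^ 2 / 4)) ^ 2 := by rw [hexp]
        _ ≤ α / Real.pi * gaussI α r ^ 2 :=
            mul_le_mul_of_nonneg_left hsq (by positivity)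
    calc (α * r ^ 2 / Real.pi) ^ n * Real.exp (-(↑n * α * r ^ 2) / 2)
        = (α * r ^ 2 / Real.pi * Real.exp (-(α * r ^ 2) / 2)) ^ n := by
          rw [mul_pow]
          congr 1
          rw [← Real.exp_nat_mul]
          congr 1
          push_cast
          ring
      _ ≤ (α / Real.pi * gaussI α r ^ 2) ^ n :=
          pow_le_pow_left₀ (by positivity) hbase n
  · rw [hc]
    have h1 : α / Real.pi * gaussI α r ^ 2 ≤ 1 := by
      have h2 := gaussI_sq_le α r hα hr
      calc α / Real.pi * gaussI α r ^ 2 ≤ α / Real.pi * (Real.pi / α) :=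
            mul_le_mul_of_nonneg_left h2 (by positivity)
        _ = 1 := by field_simp
    exact pow_le_one₀ (by positivity) h1
end
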